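/- Let X be a locally compact Hausdorff space and (Y,d) a metric space. The set D₂(X,Y) of minimal usco maps from X to Y whose total image has at most 2 points is closed in the space MU(X,Y) of minimal usco maps equipped with the topology of uniform convergence on compact sets. -/
import Mathlib


open TopologicalSpace Metric Set

noncomputable section

/-- `F` is usco: upper semicontinuous with nonempty compact values. -/
def IsUsco {X Y : Type*} [TopologicalSpace X] [TopologicalSpace Y] (F : X → Set Y) : Prop :=
  (∀ x, (F x).Nonempty) ∧ (∀ x, IsCompact (F x)) ∧
    ∀ x, ∀ V : Set Y, IsOpen V → F x ⊆ V →
      ∃ U : Set X, IsOpen U ∧ x ∈ U ∧ ∀ x' ∈ U, F x' ⊆ V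

/-- `F` is minimal usco: minimal w.r.t. inclusion (of graphs) among usco maps. -/
def IsMinimalUsco {X Y : Type*} [TopologicalSpace X] [TopologicalSpace Y] (F : X → Set Y) : Prop :=
  IsUsco F ∧ ∀ G : X → Set Y, IsUsco G → (∀ x, G x ⊆ F x) → G = F

/-- The space `MU(X,Y)` of minimal usco maps from `X` to `Y`, as a subspace of the space of all
maps `X → K(Y)` with the uniformity of uniform convergence on compact sets, where the hyperspace
`K(Y)` of nonempty compact subsets of `Y` carries the Hausdorff metric. -/
def MU (X Y : Type*) [TopologicalSpace X] [MetricSpace Y] : Type _ :=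
  {F : UniformOnFun X (NonemptyCompacts Y) {K : Set X | IsCompact K} //
    IsMinimalUsco (fun x => ((UniformOnFun.toFun {K : Set X | IsCompact K} F) x : Set Y))}

instance (X Y : Type*) [TopologicalSpace X] [MetricSpace Y] : UniformSpace (MU X Y) :=
  inferInstanceAs (UniformSpace
    {F : UniformOnFun X (NonemptyCompacts Y) {K : Set X | IsCompact K} //
      IsMinimalUsco (fun x => ((UniformOnFun.toFun {K : Set X | IsCompact K} F) x : Set Y))})

instance (X Y : Type*) [TopologicalSpace X] [MetricSpace Y] : TopologicalSpace (MU X Y) :=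
  (inferInstance : UniformSpace (MU X Y)).toTopologicalSpace

/-- The underlying multifunction of a minimal usco map. -/
def MU.toFun {X Y : Type*} [TopologicalSpace X] [MetricSpace Y] (F : MU X Y) : X → Set Y :=
  fun x => ((UniformOnFun.toFun {K : Set X | IsCompact K} F.val) x : Set Y)

/-- The value of a minimal usco map at a point, as a nonempty compact subset of `Y`. -/
def MU.val' {X Y : Type*} [TopologicalSpace X] [MetricSpace Y] (F : MU X Y) (x : X) :
    NonemptyCompacts Y :=
  UniformOnFun.toFun {K : Set X | IsCompact K} F.val x

/-- `D₂(X,Y)`: the minimal usco maps whose total image has at most two points. -/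
def D2 (X Y : Type*) [TopologicalSpace X] [MetricSpace Y] : Set (MU X Y) :=
  {F | (⋃ x, F.toFun x).encard ≤ 2}

/-- A space is locally σ-compact if every point has a σ-compact neighborhood. -/
def LocallySigmaCompact (Z : Type*) [TopologicalSpace Z] : Prop :=
  ∀ z : Z, ∃ s ∈ nhds z, IsSigmaCompact s

end

lemma eval_continuous {X Y : Type*} [TopologicalSpace X] [MetricSpace Y] (x : X) :
    Continuous fun G : MU X Y => G.val' x := by
  have h1 : UniformContinuous fun G : MU X Y => G.val' x :=
    (UniformOnFun.uniformContinuous_eval_of_mem (NonemptyCompacts Y)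
      {K : Set X | IsCompact K} (Set.mem_singleton x)
      (isCompact_singleton : IsCompact ({x} : Set X))).comp
      uniformContinuous_subtype_val
  exact h1.continuous

/-- `D₂(X,Y)` is closed in `MU(X,Y)`. -/
theorem statement3 {X Y : Type*} [TopologicalSpace X] [T2Space X] [LocallyCompactSpace X]
    [MetricSpace Y] : IsClosed (D2 X Y) := by
  rw [← isOpen_compl_iff, isOpen_iff_mem_nhds]
  intro F hF
  simp only [mem_compl_iff, D2, mem_setOf_eq, not_le] at hF
  obtain ⟨a, b, ha, hb, hab⟩ := Set.one_lt_encard_iff.mp (lt_trans (by norm_num : (1:ℕ∞) < 2) hF)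
  have hsub : ¬ (⋃ x, F.toFun x) ⊆ {a, b} := fun h =>
    absurd (le_trans (Set.encard_mono h) (Set.encard_pair hab).le) (not_le.mpr hF)
  obtain ⟨c, hc, hcab⟩ := Set.not_subset.mp hsub
  simp only [mem_insert_iff, mem_singleton_iff, not_or] at hcab
  obtain ⟨hca, hcb⟩ := hcab
  obtain ⟨xa, hxa⟩ := Set.mem_iUnion.mp ha
  obtain ⟨xb, hxb⟩ := Set.mem_iUnion.mp hb
  obtain ⟨xc, hxc⟩ := Set.mem_iUnion.mp hc
  set m : ℝ := min (dist a b) (min (dist a c) (dist b c)) with hm_def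
  have hm : 0 < m := by
    simp only [hm_def, lt_min_iff]
    exact ⟨dist_pos.mpr hab, dist_pos.mpr (Ne.symm hca), dist_pos.mpr (Ne.symm hcb)⟩
  set ε : ℝ := m / 3 with hε_def
  have hε : 0 < ε := by positivity
  have hcont : ∀ (y : Y) (x : X),
      Continuous fun G : MU X Y => infDist y (G.val' x : Set Y) := fun y x =>
    (Metric.lipschitz_infDist_set y).continuous.comp (eval_continuous x)
  set U : Set (MU X Y) :=
    {G | infDist a (G.val' xa : Set Y) < ε} ∩ {G | infDist b (G.val' xb : Set Y) < ε} ∩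
      {G | infDist c (G.val' xc : Set Y) < ε} with hU_def
  have hUopen : IsOpen U :=
    (((isOpen_Iio.preimage (hcont a xa)).inter (isOpen_Iio.preimage (hcont b xb))).inter
      (isOpen_Iio.preimage (hcont c xc)))
  have hFU : F ∈ U := by
    refine ⟨⟨?_, ?_⟩, ?_⟩ <;> simp only [mem_setOf_eq]
    · exact (Metric.infDist_zero_of_mem hxa).trans_lt hε
    · exact (Metric.infDist_zero_of_mem hxb).trans_lt hε
    · exact (Metric.infDist_zero_of_mem hxc).trans_lt hε
  refine Filter.mem_of_superset (hUopen.mem_nhds hFU) ?_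
  rintro G ⟨⟨hGa, hGb⟩, hGc⟩
  simp only [mem_setOf_eq] at hGa hGb hGc
  obtain ⟨a', ha', hda⟩ := (Metric.infDist_lt_iff (G.val' xa).nonempty).mp hGa
  obtain ⟨b', hb', hdb⟩ := (Metric.infDist_lt_iff (G.val' xb).nonempty).mp hGb
  obtain ⟨c', hc', hdc⟩ := (Metric.infDist_lt_iff (G.val' xc).nonempty).mp hGc
  have hmab : m ≤ dist a b := min_le_left _ _
  have hmac : m ≤ dist a c := le_trans (min_le_right _ _) (min_le_left _ _)
  have hmbc : m ≤ dist b c := le_trans (min_le_right _ _) (min_le_right _ _)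
  have hab' : a' ≠ b' := by
    intro h
    have h1 := dist_triangle4 a a' b' b
    have h2 : dist a' b' = 0 := by rw [h, dist_self]
    rw [dist_comm b' b] at h1
    linarith
  have hac' : a' ≠ c' := by
    intro h
    have h1 := dist_triangle4 a a' c' c
    have h2 : dist a' c' = 0 := by rw [h, dist_self]
    rw [dist_comm c' c] at h1
    linarith
  have hbc' : b' ≠ c' := by
    intro h
    have h1 := dist_triangle4 b b' c' c
    have h2 : dist b' c' = 0 := by rw [h, dist_self]
    rw [dist_comm c' c] at h1
    linarith
  simp only [mem_compl_iff, D2, mem_setOf_eq, not_le]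
  have hsub3 : ({a', b', c'} : Set Y) ⊆ ⋃ x, G.toFun x := by
    rintro z (rfl | rfl | rfl)
    · exact Set.mem_iUnion.mpr ⟨xa, ha'⟩
    · exact Set.mem_iUnion.mpr ⟨xb, hb'⟩
    · exact Set.mem_iUnion.mpr ⟨xc, hc'⟩
  have h3 : ({a', b', c'} : Set Y).encard = 3 :=
    Set.encard_eq_three.mpr ⟨a', b', c', hab', hac', hbc', rfl⟩
  calc (2 : ℕ∞) < 3 := by norm_num
    _ = ({a', b', c'} : Set Y).encard := h3.symm
    _ ≤ _ := Set.encard_mono hsub3
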